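/- Let p be an odd prime, h, k coprime positive integers, and n ≥ 1. Then, as an identity in ℚ_p (with rational numbers embedded via the canonical map ℚ → ℚ_p), the q → 1, w → 1 specialization of the twisted p-adic Dedekind sum recovers Apostol's generalized Dedekind sum: lim_{N→∞} p^{−N} Σ_{x=0}^{p^N−1} Σ_{j=0}^{k−1} (j/k) (x + {jh/k})^n exists and equals Σ_{a=1}^{k−1} (a/k) B̄_n(ha/k) = s(h,k,n). -/

import Mathlib

open Filter Topology


section AuxVolkenborn
open Polynomial

private lemma aux_telescope (n : ℕ) (t : ℚ) (M : ℕ) :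
    ((n : ℚ) + 1) * ∑ x ∈ Finset.range M, ((x : ℚ) + t) ^ n
      = (Polynomial.bernoulli (n + 1)).eval ((M : ℚ) + t)
        - (Polynomial.bernoulli (n + 1)).eval t := by
  induction M with
  | zero => simp
  | succ M ih =>
    rw [Finset.sum_range_succ, mul_add, ih]
    have h1 := Polynomial.bernoulli_eval_one_add (n + 1) ((M : ℚ) + t)
    have h2 : ((M : ℕ) + 1 : ℚ) + t = 1 + ((M : ℚ) + t) := by push_cast; ring
    rw [Nat.cast_succ, h2, h1]
    simp only [Nat.add_sub_cancel]
    push_cast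
    ring

private lemma aux_eval_sub (Q : Polynomial ℚ) (M : ℚ) :
    Q.eval M - Q.eval 0
      = M * ∑ i ∈ Finset.range Q.natDegree, Q.coeff (i + 1) * M ^ i := by
  rw [Polynomial.eval_eq_sum_range, ← Polynomial.coeff_zero_eq_eval_zero,
    Finset.sum_range_succ' (fun i => Q.coeff i * M ^ i) Q.natDegree]
  simp only [pow_zero, mul_one]
  rw [add_sub_cancel_right, Finset.mul_sum]
  exact Finset.sum_congr rfl fun i _ => by ring

private lemma aux_tendsto (p : ℕ) [Fact p.Prime] (n : ℕ) (t : ℚ) :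
    Tendsto (fun N : ℕ => ((p : ℚ_[p]) ^ N)⁻¹ *
        ∑ x ∈ Finset.range (p ^ N), ((x : ℚ_[p]) + (t : ℚ_[p])) ^ n)
      atTop (𝓝 (((Polynomial.bernoulli n).eval t : ℚ) : ℚ_[p])) := by
  set Q : Polynomial ℚ := (Polynomial.bernoulli (n + 1)).comp (X + C t) with hQ
  -- coefficient 1 of Q
  have hderiv : derivative Q = (((n : ℚ[X]) + 1) * Polynomial.bernoulli n).comp (X + C t) := by
    rw [hQ, Polynomial.derivative_comp, Polynomial.derivative_bernoulli_add_one]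
    simp
  have hcoeff1 : Q.coeff 1 = ((n : ℚ) + 1) * (Polynomial.bernoulli n).eval t := by
    have h0 : (derivative Q).coeff 0 = ((n : ℚ) + 1) * (Polynomial.bernoulli n).eval t := by
      rw [Polynomial.coeff_zero_eq_eval_zero, hderiv]; simp
    have h1 := Polynomial.coeff_derivative Q 0
    rw [h0] at h1
    simpa using h1.symm
  -- rational identity for each M
  have key : ∀ M : ℕ, (∑ x ∈ Finset.range M, ((x : ℚ) + t) ^ n)
      = ((n : ℚ) + 1)⁻¹ * ((M : ℚ) * ∑ i ∈ Finset.range Q.natDegree,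
          Q.coeff (i + 1) * (M : ℚ) ^ i) := by
    intro M
    have hn1 : ((n : ℚ) + 1) ≠ 0 := by positivity
    have hQM : Q.eval (M : ℚ) = (Polynomial.bernoulli (n + 1)).eval ((M : ℚ) + t) := by
      simp [hQ]
    have hQ0 : Q.eval 0 = (Polynomial.bernoulli (n + 1)).eval t := by simp [hQ]
    have := aux_eval_sub Q (M : ℚ)
    rw [hQM, hQ0, ← aux_telescope n t M] at this
    field_simp
    linarith [this]
  -- rewrite the ℚ_p function
  have hfun : ∀ N : ℕ, ((p : ℚ_[p]) ^ N)⁻¹ *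
        ∑ x ∈ Finset.range (p ^ N), ((x : ℚ_[p]) + (t : ℚ_[p])) ^ n
      = ((n : ℚ_[p]) + 1)⁻¹ * ∑ i ∈ Finset.range Q.natDegree,
          ((Q.coeff (i + 1) : ℚ) : ℚ_[p]) * ((p : ℚ_[p]) ^ N) ^ i := by
    intro N
    have hpn : ((p : ℚ_[p]) ^ N) ≠ 0 := by
      apply pow_ne_zero
      exact_mod_cast (Nat.Prime.ne_zero (Fact.out : p.Prime) : p ≠ 0)
    have hcast : (∑ x ∈ Finset.range (p ^ N), ((x : ℚ_[p]) + (t : ℚ_[p])) ^ n)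
        = (((∑ x ∈ Finset.range (p ^ N), ((x : ℚ) + t) ^ n : ℚ)) : ℚ_[p]) := by
      push_cast; ring
    rw [hcast, key (p ^ N)]
    push_cast
    field_simp
  simp only [hfun]
  -- limit of the RHS
  have hplim : Tendsto (fun N : ℕ => (p : ℚ_[p]) ^ N) atTop (𝓝 0) :=
    tendsto_pow_atTop_nhds_zero_of_norm_lt_one Padic.norm_p_lt_one
  have hsum : Tendsto (fun N : ℕ => ∑ i ∈ Finset.range Q.natDegree,
        ((Q.coeff (i + 1) : ℚ) : ℚ_[p]) * ((p : ℚ_[p]) ^ N) ^ i) atTop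
      (𝓝 (∑ i ∈ Finset.range Q.natDegree,
        ((Q.coeff (i + 1) : ℚ) : ℚ_[p]) * (0 : ℚ_[p]) ^ i)) := by
    apply tendsto_finset_sum
    intro i _
    exact (continuous_const.mul (continuous_pow i)).continuousAt.tendsto.comp hplim
  have hval : (∑ i ∈ Finset.range Q.natDegree,
        ((Q.coeff (i + 1) : ℚ) : ℚ_[p]) * (0 : ℚ_[p]) ^ i)
      = ((Q.coeff 1 : ℚ) : ℚ_[p]) := by
    rcases Nat.eq_zero_or_pos Q.natDegree with hD | hD
    · rw [hD]
      have : Q.coeff 1 = 0 := Polynomial.coeff_eq_zero_of_natDegree_lt (by omega)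
      simp [this]
    · rw [Finset.sum_eq_single 0]
      · simp
      · intro i _ hi
        simp [zero_pow hi]
      · intro habs
        exact absurd (Finset.mem_range.mpr hD) habs
  have := (tendsto_const_nhds (x := ((n : ℚ_[p]) + 1)⁻¹)).mul hsum
  rw [hval] at this
  convert this using 2
  rw [hcoeff1]
  have hn1 : ((n : ℚ_[p]) + 1) ≠ 0 := by
    have : ((n + 1 : ℕ) : ℚ_[p]) ≠ 0 := Nat.cast_ne_zero.mpr (Nat.succ_ne_zero n)
    push_cast at this
    exact this
  push_cast
  field_simp

end AuxVolkenborn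

/-- Let `p` be an odd prime, `h, k` coprime positive integers, and `n ≥ 1`. Then, in `ℚ_p`,
the `q → 1`, `w → 1` specialization of the twisted `p`-adic Dedekind sum recovers Apostol's
generalized Dedekind sum: the Volkenborn limit
`lim_N p^(-N) ∑_{x<p^N} ∑_{j<k} (j/k) (x + {jh/k})^n` exists and equals
`s(h,k,n) = ∑_{a=1}^{k-1} (a/k) B̄_n(ha/k)`, where `B̄_n(ha/k) = B_n({ha/k})`. -/
theorem volkenborn_dedekind_sum_eq_apostol (p : ℕ) [Fact p.Prime] (hpodd : Odd p)
    (h k : ℕ) (hh : 0 < h) (hk : 0 < k) (hcop : Nat.Coprime h k) (n : ℕ) (hn : 1 ≤ n) :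
    Tendsto
      (fun N : ℕ => ((p : ℚ_[p]) ^ N)⁻¹ *
        ∑ x ∈ Finset.range (p ^ N), ∑ j ∈ Finset.range k,
          (((j : ℚ) / k : ℚ) : ℚ_[p]) *
            ((x : ℚ_[p]) + ((Int.fract ((j * h : ℚ) / k) : ℚ) : ℚ_[p])) ^ n)
      atTop
      (𝓝 (((∑ a ∈ Finset.Icc 1 (k - 1),
        ((a : ℚ) / k) * (Polynomial.bernoulli n).eval (Int.fract ((h * a : ℚ) / k)) : ℚ)
          : ℚ_[p]))) := by

  have hmain : ∀ N : ℕ, ((p : ℚ_[p]) ^ N)⁻¹ *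
        ∑ x ∈ Finset.range (p ^ N), ∑ j ∈ Finset.range k,
          (((j : ℚ) / k : ℚ) : ℚ_[p]) *
            ((x : ℚ_[p]) + ((Int.fract ((j * h : ℚ) / k) : ℚ) : ℚ_[p])) ^ n
      = ∑ j ∈ Finset.range k, (((j : ℚ) / k : ℚ) : ℚ_[p]) *
          (((p : ℚ_[p]) ^ N)⁻¹ * ∑ x ∈ Finset.range (p ^ N),
            ((x : ℚ_[p]) + ((Int.fract ((j * h : ℚ) / k) : ℚ) : ℚ_[p])) ^ n) := by
    intro N
    rw [Finset.sum_comm, Finset.mul_sum]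
    refine Finset.sum_congr rfl fun j _ => ?_
    rw [← Finset.mul_sum]
    ring
  have hlim : Tendsto (fun N : ℕ => ∑ j ∈ Finset.range k, (((j : ℚ) / k : ℚ) : ℚ_[p]) *
        (((p : ℚ_[p]) ^ N)⁻¹ * ∑ x ∈ Finset.range (p ^ N),
          ((x : ℚ_[p]) + ((Int.fract ((j * h : ℚ) / k) : ℚ) : ℚ_[p])) ^ n)) atTop
      (𝓝 (∑ j ∈ Finset.range k, (((j : ℚ) / k : ℚ) : ℚ_[p]) *
        (((Polynomial.bernoulli n).eval (Int.fract ((j * h : ℚ) / k)) : ℚ) : ℚ_[p]))) :=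
    tendsto_finset_sum _ fun j _ =>
      tendsto_const_nhds.mul (aux_tendsto p n (Int.fract ((j * h : ℚ) / k)))
  have hval : (∑ j ∈ Finset.range k, (((j : ℚ) / k : ℚ) : ℚ_[p]) *
        (((Polynomial.bernoulli n).eval (Int.fract ((j * h : ℚ) / k)) : ℚ) : ℚ_[p]))
      = (((∑ a ∈ Finset.Icc 1 (k - 1),
        ((a : ℚ) / k) * (Polynomial.bernoulli n).eval (Int.fract ((h * a : ℚ) / k)) : ℚ))
          : ℚ_[p]) := by
    have hq : (∑ j ∈ Finset.range k,
          ((j : ℚ) / k) * (Polynomial.bernoulli n).eval (Int.fract ((j * h : ℚ) / k)))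
        = ∑ a ∈ Finset.Icc 1 (k - 1),
          ((a : ℚ) / k) * (Polynomial.bernoulli n).eval (Int.fract ((h * a : ℚ) / k)) := by
      rw [← Finset.sum_subset (fun a ha => ?_) (fun j hj hj' => ?_)]
      · exact Finset.sum_congr rfl fun a _ => by rw [mul_comm (a : ℚ) (h : ℚ)]
      · simp only [Finset.mem_Icc] at ha
        simp only [Finset.mem_range]
        omega
      · simp only [Finset.mem_range] at hj
        simp only [Finset.mem_Icc] at hj'
        have : j = 0 := by omega
        simp [this]
    rw [← hq]
    push_cast
    rfl
  rw [← hval]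
  simpa only [hmain] using hlim
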